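/- Let C(n) be the number of coprime permutations of {1,…,n} and let C_1(n) be the number of injections f from {1,…,n} into the set {1,3,…,2n+1} of the first n+1 odd positive integers with gcd(i, f(i)) = 1 for each i ∈ [n]. Then C(2n+1) ≤ C_1(n)² for all n ≥ 1. -/

import Mathlib

/-- The number of coprime permutations of `{1,…,n}`: permutations `σ` of `{1,…,n}`
(encoded as permutations of `Fin n` via `j ↦ j+1`) with `gcd(j, σ j) = 1` for all `j`. -/
def C (n : ℕ) : ℕ :=
  Fintype.card {σ : Equiv.Perm (Fin n) // ∀ j, Nat.gcd (j.val + 1) ((σ j).val + 1) = 1}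

/-- The number of coprime injections from `{1,…,n}` into the first `n+1` odd numbers
`{1,3,…,2n+1}` (encoded as `j ↦ 2j+1`). -/
noncomputable def C1 (n : ℕ) : ℕ :=
  Fintype.card {f : Fin n ↪ Fin (n + 1) // ∀ i, Nat.gcd (i.val + 1) (2 * (f i).val + 1) = 1}

theorem Equiv.Perm.apply_inv_self {α : Type*} (f : Equiv.Perm α) (x : α) : f (f⁻¹ x) = x :=
  Equiv.apply_symm_apply f x

theorem Equiv.Perm.inv_apply_self {α : Type*} (f : Equiv.Perm α) (x : α) : f⁻¹ (f x) = x :=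
  Equiv.symm_apply_apply f x

lemma parity_lemma {n : ℕ} (σ : Equiv.Perm (Fin (2*n+1)))
    (hσ : ∀ j, Nat.gcd (j.val+1) ((σ j).val+1) = 1)
    (j : Fin (2*n+1)) (hj : j.val % 2 = 1) : (σ j).val % 2 = 0 := by
  by_contra h
  have h2 : 2 ∣ Nat.gcd (j.val+1) ((σ j).val+1) :=
    Nat.dvd_gcd (by omega) (by omega)
  rw [hσ j] at h2; omega

lemma uniq_lemma {n : ℕ} (σ : Equiv.Perm (Fin (2*n+1)))
    (hσ : ∀ j, Nat.gcd (j.val+1) ((σ j).val+1) = 1)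
    (x x' : Fin (2*n+1)) (hx : x.val % 2 = 0) (hx' : x'.val % 2 = 0)
    (hσx : (σ x).val % 2 = 0) (hσx' : (σ x').val % 2 = 0) : x = x' := by
  by_contra hne
  set p : Fin n ⊕ Bool → Fin (2*n+1) := fun s => Sum.elim
    (fun i => (⟨2*i.val+1, by have := i.isLt; omega⟩ : Fin (2*n+1)))
    (fun b => if b then x else x') s with hp
  have ppar : ∀ s, (σ (p s)).val % 2 = 0 := by
    rintro (i | b)
    · exact parity_lemma σ hσ _ (by show (2*i.val+1) % 2 = 1; omega)
    · cases b <;> simpa [hp]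
  have pinj : Function.Injective p := by
    rintro (i | b) (i' | b') h
    · simp only [hp, Sum.elim_inl, Fin.mk.injEq] at h
      have : i = i' := Fin.ext (by omega)
      rw [this]
    · exfalso
      have h1 : (p (Sum.inl i)).val % 2 = 1 := by show (2*i.val+1) % 2 = 1; omega
      have h2 : (p (Sum.inr b')).val % 2 = 0 := by cases b' <;> simpa [hp]
      rw [h] at h1; omega
    · exfalso
      have h1 : (p (Sum.inl i')).val % 2 = 1 := by show (2*i'.val+1) % 2 = 1; omega
      have h2 : (p (Sum.inr b)).val % 2 = 0 := by cases b <;> simpa [hp]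
      rw [← h] at h1; omega
    · have h' : (if b then x else x') = (if b' then x else x') := by simpa [hp] using h
      cases b <;> cases b' <;> simp_all
  set G : Fin n ⊕ Bool → Fin (n+1) := fun s =>
    ⟨(σ (p s)).val / 2, by have := (σ (p s)).isLt; omega⟩ with hG
  have Ginj : Function.Injective G := by
    intro s t h
    simp only [hG, Fin.mk.injEq] at h
    have hs := ppar s; have ht := ppar t
    have : σ (p s) = σ (p t) := Fin.ext (by omega)
    exact pinj (σ.injective this)
  have := Fintype.card_le_of_injective G Ginj
  simp at this

def restrictHalf {n : ℕ} (σ : Equiv.Perm (Fin (2*n+1)))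
    (hσ : ∀ j, Nat.gcd (j.val+1) ((σ j).val+1) = 1) : Fin n ↪ Fin (n+1) where
  toFun i := ⟨(σ ⟨2*i.val+1, by have := i.isLt; omega⟩).val / 2,
    by have := (σ ⟨2*i.val+1, by have := i.isLt; omega⟩).isLt; omega⟩
  inj' i i' h := by
    simp only [Fin.mk.injEq] at h
    have p1 := parity_lemma σ hσ ⟨2*i.val+1, by have := i.isLt; omega⟩
      (by show (2*i.val+1) % 2 = 1; omega)
    have p2 := parity_lemma σ hσ ⟨2*i'.val+1, by have := i'.isLt; omega⟩
      (by show (2*i'.val+1) % 2 = 1; omega)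
    have h2 : σ ⟨2*i.val+1, by have := i.isLt; omega⟩
        = σ ⟨2*i'.val+1, by have := i'.isLt; omega⟩ := Fin.ext (by omega)
    have := σ.injective h2
    simp only [Fin.mk.injEq] at this
    exact Fin.ext (by omega)

lemma restrictHalf_coprime {n : ℕ} (σ : Equiv.Perm (Fin (2*n+1)))
    (hσ : ∀ j, Nat.gcd (j.val+1) ((σ j).val+1) = 1) (i : Fin n) :
    Nat.gcd (i.val + 1) (2 * ((restrictHalf σ hσ) i).val + 1) = 1 := by
  have p1 := parity_lemma σ hσ ⟨2*i.val+1, by have := i.isLt; omega⟩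
    (by show (2*i.val+1) % 2 = 1; omega)
  have key : 2 * ((restrictHalf σ hσ) i).val + 1
      = (σ ⟨2*i.val+1, by have := i.isLt; omega⟩).val + 1 := by
    simp only [restrictHalf, Function.Embedding.coeFn_mk]
    show 2 * ((σ ⟨2*i.val+1, by have := i.isLt; omega⟩).val / 2) + 1 = _
    omega
  rw [key]
  have hg := hσ ⟨2*i.val+1, by have := i.isLt; omega⟩
  exact Nat.Coprime.coprime_dvd_left ⟨2, by simp; omega⟩ hg

lemma inv_cond {n : ℕ} (σ : Equiv.Perm (Fin (2*n+1)))
    (hσ : ∀ j, Nat.gcd (j.val+1) ((σ j).val+1) = 1) :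
    ∀ j, Nat.gcd (j.val+1) ((σ⁻¹ j).val+1) = 1 := by
  intro j
  have := hσ (σ⁻¹ j)
  rw [Equiv.Perm.apply_inv_self] at this
  rw [Nat.gcd_comm]; exact this

theorem stmt_5 (n : ℕ) (hn : 1 ≤ n) : C (2 * n + 1) ≤ C1 n ^ 2 := by
  classical
  have key : C (2*n+1) ≤ C1 n * C1 n := by
    rw [C, C1, ← Fintype.card_prod]
    apply Fintype.card_le_of_injective
      (fun σ => (⟨restrictHalf σ.1 σ.2, restrictHalf_coprime σ.1 σ.2⟩,
                 ⟨restrictHalf σ.1⁻¹ (inv_cond σ.1 σ.2),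
                  restrictHalf_coprime σ.1⁻¹ (inv_cond σ.1 σ.2)⟩))
    rintro ⟨σ, hσ⟩ ⟨τ, hτ⟩ h
    simp only [Prod.mk.injEq, Subtype.mk.injEq] at h
    obtain ⟨h1, h2⟩ := h
    -- agreement on even numbers (odd val)
    have agree : ∀ (ρ π : Equiv.Perm (Fin (2*n+1)))
        (hρ : ∀ j, Nat.gcd (j.val+1) ((ρ j).val+1) = 1)
        (hπ : ∀ j, Nat.gcd (j.val+1) ((π j).val+1) = 1),
        restrictHalf ρ hρ = restrictHalf π hπ →
        ∀ v : Fin (2*n+1), v.val % 2 = 1 → ρ v = π v := by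
      intro ρ π hρ hπ heq v hv
      have hk : v.val / 2 < n := by have := v.isLt; omega
      have hv2 : (⟨2*(v.val/2)+1, by omega⟩ : Fin (2*n+1)) = v :=
        Fin.ext (show 2*(v.val/2)+1 = v.val by omega)
      have := DFunLike.congr_fun heq ⟨v.val/2, hk⟩
      simp only [restrictHalf, Function.Embedding.coeFn_mk, Fin.mk.injEq] at this
      replace this := congrArg Fin.val this
      change (ρ ⟨2*(v.val/2)+1, by omega⟩).val / 2 = (π ⟨2*(v.val/2)+1, by omega⟩).val / 2 at this
      rw [hv2] at this
      have pρ := parity_lemma ρ hρ v hv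
      have pπ := parity_lemma π hπ v hv
      exact Fin.ext (by omega)
    have ag1 : ∀ v : Fin (2*n+1), v.val % 2 = 1 → σ v = τ v :=
      agree σ τ hσ hτ h1
    have ag2 : ∀ v : Fin (2*n+1), v.val % 2 = 1 → σ⁻¹ v = τ⁻¹ v :=
      agree σ⁻¹ τ⁻¹ (inv_cond σ hσ) (inv_cond τ hτ) h2
    refine Subtype.ext (Equiv.ext fun x => ?_)
    rcases Nat.mod_two_eq_zero_or_one x.val with hx | hx
    · rcases Nat.mod_two_eq_zero_or_one (σ x).val with hsx | hsx
      · rcases Nat.mod_two_eq_zero_or_one (τ x).val with htx | htx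
        · -- both images odd-valued numbers: use uniqueness for τ
          by_cases hy : (τ⁻¹ (σ x)).val % 2 = 1
          · -- then τ (τ⁻¹ (σ x)) = σ (τ⁻¹ (σ x)), so σ x = σ y with y even-num
            exfalso
            have := ag1 _ hy
            rw [Equiv.Perm.apply_inv_self] at this
            have hxy := σ.injective this.symm
            rw [← hxy] at hy; omega
          · have hy0 : (τ⁻¹ (σ x)).val % 2 = 0 := by omega
            have hty : (τ (τ⁻¹ (σ x))).val % 2 = 0 := by
              rw [Equiv.Perm.apply_inv_self]; exact hsx
            have hxy := uniq_lemma τ hτ x (τ⁻¹ (σ x)) hx hy0 htx hty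
            have h4 : τ x = τ (τ⁻¹ (σ x)) := congrArg τ hxy
            rw [Equiv.Perm.apply_inv_self] at h4
            exact h4.symm
        · -- τ x even-valued... τ x has val % 2 = 1, so use ag2 at τ x
          have := ag2 _ htx
          rw [Equiv.Perm.inv_apply_self] at this
          have h3 : σ (σ⁻¹ (τ x)) = σ x := congrArg σ this
          rw [Equiv.Perm.apply_inv_self] at h3
          exact h3.symm
      · -- σ x val % 2 = 1
        have := ag2 _ hsx
        rw [Equiv.Perm.inv_apply_self] at this
        have h3 : τ x = τ (τ⁻¹ (σ x)) := congrArg τ this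
        rw [Equiv.Perm.apply_inv_self] at h3
        exact h3.symm
    · exact ag1 x hx
  calc C (2*n+1) ≤ C1 n * C1 n := key
    _ = C1 n ^ 2 := (sq (C1 n)).symm
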